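/- arXiv:2001.08548 — 4 statements merged into one kernel-verified Lean document; each statement's English description precedes it below -/
import Mathlib

section
/- Let (red_u, prop_u) and (red_v, prop_v) be two labels at the same flight, and suppose red_u ≤ red_v and prop_u ≤ prop_v (weak dominance). Extend both labels along the same flight connection with slack s ∈ ℝ, incoming primary delay p ∈ ℝ, and dual values π ≥ 0 and ν ∈ ℝ, obtaining (red_u', prop_u') and (red_v', prop_v'). Then red_u' ≤ red_v' and prop_u' ≤ prop_v'; that is, weak dominance of labels is preserved under label extension. -/
/-- Weak dominance of labels is preserved under a single label extension.
A label is a pair `(red, prop)`. Extending along a connection with slack `s`,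
primary delay `p`, and dual values `π ≥ 0`, `ν` gives
`prop' = max 0 (prop + p - s)` and `red' = red + prop' * π - ν`. -/
theorem weak_dominance_preserved_under_extension
    (red_u prop_u red_v prop_v s p π ν : ℝ) (hπ : 0 ≤ π)
    (hred : red_u ≤ red_v) (hprop : prop_u ≤ prop_v) :
    red_u + (max 0 (prop_u + p - s)) * π - ν ≤
      red_v + (max 0 (prop_v + p - s)) * π - ν ∧
    max 0 (prop_u + p - s) ≤ max 0 (prop_v + p - s) := by
  have h : max 0 (prop_u + p - s) ≤ max 0 (prop_v + p - s) :=
    max_le_max le_rfl (by linarith)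
  exact ⟨by nlinarith [mul_le_mul_of_nonneg_right h hπ], h⟩
end

section
/- Let (red_u, prop_u) and (red_v, prop_v) be two labels at the same flight such that red_u ≤ red_v, prop_u ≤ prop_v, and at least one of these inequalities is strict (i.e., u dominates v). Extend both labels along the same flight connection with slack s ∈ ℝ, incoming primary delay p ∈ ℝ, and dual values π ≥ 0 and ν ∈ ℝ, obtaining (red_u', prop_u') and (red_v', prop_v'). If moreover red_u < red_v or prop_v + p − s > 0, then red_u' ≤ red_v', prop_u' ≤ prop_v', and at least one of these inequalities is strict; that is, the extended label u' dominates the extended label v'. -/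
/-- Strict dominance of labels is preserved under label extension, provided
either the reduced-cost inequality is strict or the extended delay of the
dominated label is positive. A label is a pair `(red, prop)`; extending along
a connection with slack `s`, primary delay `p`, and dual values `π ≥ 0`, `ν`
gives `prop' = max 0 (prop + p - s)` and `red' = red + prop' * π - ν`. -/
theorem dominance_preserved_under_extension
    (red_u prop_u red_v prop_v s p π ν : ℝ) (hπ : 0 ≤ π)
    (hred : red_u ≤ red_v) (hprop : prop_u ≤ prop_v)
    (hstrict : red_u < red_v ∨ prop_u < prop_v)
    (hcond : red_u < red_v ∨ 0 < prop_v + p - s) :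
    red_u + (max 0 (prop_u + p - s)) * π - ν ≤
      red_v + (max 0 (prop_v + p - s)) * π - ν ∧
    max 0 (prop_u + p - s) ≤ max 0 (prop_v + p - s) ∧
    (red_u + (max 0 (prop_u + p - s)) * π - ν <
        red_v + (max 0 (prop_v + p - s)) * π - ν ∨
      max 0 (prop_u + p - s) < max 0 (prop_v + p - s)) := by
  have hmax : max 0 (prop_u + p - s) ≤ max 0 (prop_v + p - s) :=
    max_le_max le_rfl (by linarith)
  have hmul : (max 0 (prop_u + p - s)) * π ≤ (max 0 (prop_v + p - s)) * π :=
    mul_le_mul_of_nonneg_right hmax hπ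
  refine ⟨by linarith, hmax, ?_⟩
  rcases hcond with h | h
  · left; linarith
  · rcases hstrict with h' | h'
    · left; linarith
    · right
      have : max 0 (prop_v + p - s) = prop_v + p - s := max_eq_right h.le
      rw [this]
      exact max_lt h (by linarith)
end

section
/- Let (red_u, prop_u) and (red_v, prop_v) be two labels with red_u ≤ red_v and prop_u ≤ prop_v, and let (p_1, s_1, π_1, ν_1), …, (p_k, s_k, π_k, ν_k) be any finite sequence of extension parameters with π_i ≥ 0 for every i. Apply the extension operation successively with these parameters, in order, to both labels, obtaining final labels (red_u^{(k)}, prop_u^{(k)}) and (red_v^{(k)}, prop_v^{(k)}). Then red_u^{(k)} ≤ red_v^{(k)} and prop_u^{(k)} ≤ prop_v^{(k)}; that is, weak dominance is preserved along any sequence of label extensions, so any route obtainable by successively extending v to the sink can be matched by extending u with a route of no larger reduced cost. -/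
/-- Extending a label `(red, prop)` along a connection with parameters
`(p, s, π, ν)` produces `(red + prop' * π - ν, prop')` where
`prop' = max 0 (prop + p - s)`. -/
def extendLabel (P : ℝ × ℝ × ℝ × ℝ) (L : ℝ × ℝ) : ℝ × ℝ :=
  (L.1 + (max 0 (L.2 + P.1 - P.2.1)) * P.2.2.1 - P.2.2.2,
   max 0 (L.2 + P.1 - P.2.1))

/-- Weak dominance of labels is preserved along any finite sequence of label
extensions applied, in order, to both labels (all with nonnegative `π`). -/
theorem weak_dominance_preserved_under_extension_sequence
    (red_u prop_u red_v prop_v : ℝ)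
    (params : List (ℝ × ℝ × ℝ × ℝ))
    (hπ : ∀ P ∈ params, 0 ≤ P.2.2.1)
    (hred : red_u ≤ red_v) (hprop : prop_u ≤ prop_v) :
    (params.foldl (fun L P => extendLabel P L) (red_u, prop_u)).1 ≤
      (params.foldl (fun L P => extendLabel P L) (red_v, prop_v)).1 ∧
    (params.foldl (fun L P => extendLabel P L) (red_u, prop_u)).2 ≤
      (params.foldl (fun L P => extendLabel P L) (red_v, prop_v)).2 := by
  induction params generalizing red_u prop_u red_v prop_v with
  | nil => exact ⟨hred, hprop⟩
  | cons P rest ih =>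
    simp only [List.foldl_cons]
    have hπP : 0 ≤ P.2.2.1 := hπ P List.mem_cons_self
    have hprop' : max 0 (prop_u + P.1 - P.2.1) ≤ max 0 (prop_v + P.1 - P.2.1) := by
      apply max_le_max le_rfl; linarith
    refine ih _ _ _ _ (fun Q hQ => hπ Q (List.mem_cons_of_mem _ hQ)) ?_ hprop'
    have := mul_le_mul_of_nonneg_right hprop' hπP
    simp only [extendLabel]; linarith
end

section
/- Correctness of the column-generation termination criterion: let T, F, R be finite sets (tails, flights, routes), a : R → T, b : R → Finset F, d : R → F → ℝ, e : F → ℝ, and x : F → ℝ as in the recourse linear program. Suppose (μ, ν, π) satisfies 0 ≤ π f ≤ e f for every f and the reduced cost of every route r ∈ R is nonnegative, i.e., Σ_{f ∈ b r} ((d r f) · (π f) − ν f) − μ (a r) ≥ 0 for every r ∈ R. Suppose (ŷ, ẑ) is a primal feasible solution of the recourse linear program whose objective value Σ_f (e f) · (ẑ f) equals the dual objective Σ_t μ t + Σ_f (ν f − (x f) · (π f)). Then for every primal feasible (y, z) of the recourse linear program, Σ_f (e f) · (z f) ≥ Σ_f (e f) · (ẑ f); that is, if the pricing problem finds no route with negative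 reduced cost, the current restricted solution is optimal for the full recourse linear program. -/
/-- Correctness of the column-generation termination criterion: if every route
has nonnegative reduced cost with respect to duals `(μ, ν, π)` with
`0 ≤ π ≤ e`, and `(yhat, zhat)` is a primal feasible solution whose objective
equals the dual objective, then `(yhat, zhat)` is optimal for the full
recourse LP. -/
theorem column_generation_termination_optimal
    {T F R : Type*} [Fintype T] [Fintype F] [Fintype R]
    [DecidableEq T] [DecidableEq F]
    (a : R → T) (b : R → Finset F) (d : R → F → ℝ) (e : F → ℝ) (x : F → ℝ)
    (μ : T → ℝ) (ν : F → ℝ) (π : F → ℝ)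
    (hπ0 : ∀ f, 0 ≤ π f) (hπe : ∀ f, π f ≤ e f)
    (hrc : ∀ r, 0 ≤ (∑ f ∈ b r, (d r f * π f - ν f)) - μ (a r))
    (yhat : R → ℝ) (zhat : F → ℝ)
    (hyhat : ∀ r, 0 ≤ yhat r) (hzhat : ∀ f, 0 ≤ zhat f)
    (hhattail : ∀ t, ∑ r ∈ Finset.univ.filter (fun r => a r = t), yhat r = 1)
    (hhatflight : ∀ f, ∑ r ∈ Finset.univ.filter (fun r => f ∈ b r), yhat r = 1)
    (hhatlink : ∀ f, (∑ r ∈ Finset.univ.filter (fun r => f ∈ b r), d r f * yhat r) - x f ≤ zhat f)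
    (hobj : ∑ f, e f * zhat f = (∑ t, μ t) + ∑ f, (ν f - x f * π f)) :
    ∀ (y : R → ℝ) (z : F → ℝ),
      (∀ r, 0 ≤ y r) → (∀ f, 0 ≤ z f) →
      (∀ t, ∑ r ∈ Finset.univ.filter (fun r => a r = t), y r = 1) →
      (∀ f, ∑ r ∈ Finset.univ.filter (fun r => f ∈ b r), y r = 1) →
      (∀ f, (∑ r ∈ Finset.univ.filter (fun r => f ∈ b r), d r f * y r) - x f ≤ z f) →
      ∑ f, e f * zhat f ≤ ∑ f, e f * z f := by
  intro y z hy hz htail hflight hlink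
  rw [hobj]
  -- swap lemma: sums over flights of fiber sums equal sums over routes
  have swap : ∀ (g : R → F → ℝ),
      ∑ f, ∑ r ∈ Finset.univ.filter (fun r => f ∈ b r), g r f
        = ∑ r, ∑ f ∈ b r, g r f := by
    intro g
    simp_rw [Finset.sum_filter]
    rw [Finset.sum_comm]
    refine Finset.sum_congr rfl fun r _ => ?_
    rw [← Finset.sum_filter]
    congr 1
    ext f
    simp
  -- tail duals: ∑ t μ t = ∑ r μ (a r) * y r
  have htailsum : ∑ t, μ t = ∑ r, μ (a r) * y r := by
    have h1 : ∑ t, μ t = ∑ t, ∑ r ∈ Finset.univ.filter (fun r => a r = t), μ (a r) * y r := by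
      refine Finset.sum_congr rfl fun t _ => ?_
      rw [Finset.sum_congr rfl (fun r hr => by rw [(Finset.mem_filter.mp hr).2])]
      rw [← Finset.mul_sum, htail t, mul_one]
    rw [h1, Finset.sum_fiberwise]
  -- flight duals
  have hνsum : ∑ f, ν f = ∑ r, ∑ f ∈ b r, ν f * y r := by
    rw [← swap (fun r f => ν f * y r)]
    refine Finset.sum_congr rfl fun f _ => ?_
    rw [← Finset.mul_sum, hflight f, mul_one]
  -- propagated delay term
  have hdsum : ∑ f, π f * ((∑ r ∈ Finset.univ.filter (fun r => f ∈ b r), d r f * y r))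
      = ∑ r, ∑ f ∈ b r, d r f * π f * y r := by
    rw [← swap (fun r f => d r f * π f * y r)]
    refine Finset.sum_congr rfl fun f _ => ?_
    rw [Finset.mul_sum]
    exact Finset.sum_congr rfl (fun r _ => by ring)
  -- key dual bound
  have key : (∑ t, μ t) + ∑ f, (ν f - x f * π f)
      ≤ ∑ f, π f * z f := by
    have hrcsum : ∑ r, (μ (a r) + ∑ f ∈ b r, (ν f - d r f * π f)) * y r ≤ 0 := by
      apply Finset.sum_nonpos
      intro r _
      apply mul_nonpos_of_nonpos_of_nonneg _ (hy r)
      have := hrc r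
      have : μ (a r) + ∑ f ∈ b r, (ν f - d r f * π f)
          = -((∑ f ∈ b r, (d r f * π f - ν f)) - μ (a r)) := by
        rw [Finset.sum_sub_distrib, Finset.sum_sub_distrib]; ring
      rw [this]
      linarith [hrc r]
    have hlinkbound : ∑ f, π f * ((∑ r ∈ Finset.univ.filter (fun r => f ∈ b r), d r f * y r) - x f)
        ≤ ∑ f, π f * z f := by
      apply Finset.sum_le_sum
      intro f _
      exact mul_le_mul_of_nonneg_left (hlink f) (hπ0 f)
    have expand : (∑ t, μ t) + ∑ f, (ν f - x f * π f)
        = (∑ r, (μ (a r) + ∑ f ∈ b r, (ν f - d r f * π f)) * y r)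
          + ∑ f, π f * ((∑ r ∈ Finset.univ.filter (fun r => f ∈ b r), d r f * y r) - x f) := by
      have e1 : ∑ r, (μ (a r) + ∑ f ∈ b r, (ν f - d r f * π f)) * y r
          = (∑ r, μ (a r) * y r) + (∑ r, ∑ f ∈ b r, ν f * y r)
            - ∑ r, ∑ f ∈ b r, d r f * π f * y r := by
        rw [← Finset.sum_add_distrib, ← Finset.sum_sub_distrib]
        refine Finset.sum_congr rfl fun r _ => ?_
        have hs : ∑ f ∈ b r, (ν f - d r f * π f) * y r
            = (∑ f ∈ b r, ν f * y r) - ∑ f ∈ b r, d r f * π f * y r := by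
          rw [← Finset.sum_sub_distrib]
          exact Finset.sum_congr rfl (fun f _ => by ring)
        rw [add_mul, Finset.sum_mul, hs]
        ring
      have e2 : ∑ f, π f * ((∑ r ∈ Finset.univ.filter (fun r => f ∈ b r), d r f * y r) - x f)
          = (∑ r, ∑ f ∈ b r, d r f * π f * y r) - ∑ f, x f * π f := by
        rw [← hdsum, ← Finset.sum_sub_distrib]
        exact Finset.sum_congr rfl (fun f _ => by ring)
      rw [e1, e2, htailsum, Finset.sum_sub_distrib, hνsum]
      ring
    calc (∑ t, μ t) + ∑ f, (ν f - x f * π f)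
        = _ := expand
      _ ≤ 0 + ∑ f, π f * ((∑ r ∈ Finset.univ.filter (fun r => f ∈ b r), d r f * y r) - x f) := by
          exact add_le_add hrcsum le_rfl
      _ = _ := by rw [zero_add]
      _ ≤ ∑ f, π f * z f := hlinkbound
  refine key.trans (Finset.sum_le_sum fun f _ => ?_)
  exact mul_le_mul_of_nonneg_right (hπe f) (hz f)
end
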